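/- For n ≥ 2, the nonlinearity of the majority function in 2n+1 variables is N(M_{2n+1}) = 2^(2n) − C(2n,n), where C(2n,n) is the central binomial coefficient. -/

import Mathlib

open Finset

/-- Hamming weight of a vector in `V_N = (Fin N → ZMod 2)`. -/
def wtV {N : ℕ} (x : Fin N → ZMod 2) : ℕ :=
  (Finset.univ.filter (fun i => x i = 1)).card

/-- Hamming weight of a Boolean function `f : V_N → GF(2)`. -/
def wtF {N : ℕ} (f : (Fin N → ZMod 2) → ZMod 2) : ℕ :=
  (Finset.univ.filter (fun x => f x = 1)).card

/-- `a` is affine: `a x = w · x + b` for some `w ∈ V_N`, `b ∈ GF(2)`. -/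
def IsAffine {N : ℕ} (a : (Fin N → ZMod 2) → ZMod 2) : Prop :=
  ∃ w : Fin N → ZMod 2, ∃ b : ZMod 2, ∀ x, a x = (∑ i, w i * x i) + b

/-- Hamming distance `d(f,g) = wt(f + g)`. -/
def hdist {N : ℕ} (f g : (Fin N → ZMod 2) → ZMod 2) : ℕ :=
  wtF (fun x => f x + g x)

/-- Nonlinearity: minimum distance to affine functions. -/
noncomputable def nlin {N : ℕ} (f : (Fin N → ZMod 2) → ZMod 2) : ℕ :=
  sInf {d : ℕ | ∃ a, IsAffine a ∧ d = hdist f a}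

/-- Threshold (majority-type) function: `maj N t x = 1` iff `wt(x) ≥ t`.
So `M_{2n+1} = maj (2n+1) (n+1)` and `M_{2n} = maj (2n) n`. -/
def maj (N t : ℕ) (x : Fin N → ZMod 2) : ZMod 2 :=
  if t ≤ wtV x then 1 else 0


namespace MajAux
def chi (v : ZMod 2) : ℤ := if v = 1 then -1 else 1
lemma chi_add : ∀ u v : ZMod 2, chi (u + v) = chi u * chi v := by decide
lemma chi_one : chi 1 = -1 := by decide
lemma abs_chi (v : ZMod 2) : |chi v| = 1 := by
  unfold chi; split <;> norm_num

lemma wtV_update {N : ℕ} (x : Fin N → ZMod 2) (i : Fin N) (hx : x i = 0) :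
    wtV (Function.update x i 1) = wtV x + 1 := by
  unfold wtV
  have hfe : univ.filter (fun j => Function.update x i 1 j = 1)
      = insert i (univ.filter (fun j => x j = 1)) := by
    ext j
    simp only [mem_filter, mem_univ, true_and, mem_insert, Function.update_apply]
    by_cases hj : j = i
    · subst hj; simp
    · simp [hj]
  rw [hfe, Finset.card_insert_of_notMem]
  simp [hx]

lemma dot_update {N : ℕ} (w x : Fin N → ZMod 2) (i : Fin N) (hi : w i = 1) (c : ZMod 2) :
    ∑ j, w j * (Function.update x i c) j = (∑ j, w j * x j) + (c + x i) := by
  have hfe : (fun j => w j * (Function.update x i c) j)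
      = Function.update (fun j => w j * x j) i c := by
    funext j
    by_cases hj : j = i
    · subst hj; simp [hi]
    · simp [Function.update_apply, hj]
  rw [hfe, Finset.sum_update_of_mem (Finset.mem_univ i)]
  have h2 : ∑ j, w j * x j = w i * x i + ∑ j ∈ univ.erase i, w j * x j :=
    (Finset.add_sum_erase _ _ (Finset.mem_univ i)).symm
  rw [h2, hi, Finset.erase_eq]
  have hxx : x i + x i = 0 := CharTwo.add_self_eq_zero _
  linear_combination -hxx


lemma tau_invol {N : ℕ} (x : Fin N → ZMod 2) (i : Fin N) :
    Function.update (Function.update x i (x i + 1)) i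
      ((Function.update x i (x i + 1)) i + 1) = x := by
  rw [Function.update_self, Function.update_idem]
  rw [show x i + 1 + 1 = x i from (by decide : ∀ v : ZMod 2, v + 1 + 1 = v) _]
  exact Function.update_eq_self i x

lemma S_eq (n : ℕ) (w : Fin (2*n+1) → ZMod 2) (i : Fin (2*n+1)) (hi : w i = 1) :
    ∑ x : Fin (2*n+1) → ZMod 2, chi (maj (2*n+1) (n+1) x) * chi (∑ j, w j * x j)
      = 2 * ∑ x ∈ univ.filter (fun x : Fin (2*n+1) → ZMod 2 => x i = 0 ∧ wtV x = n),
          chi (∑ j, w j * x j) := by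
  set F : (Fin (2*n+1) → ZMod 2) → ℤ :=
    fun x => chi (maj (2*n+1) (n+1) x) * chi (∑ j, w j * x j) with hF
  set τ : (Fin (2*n+1) → ZMod 2) → (Fin (2*n+1) → ZMod 2) :=
    fun x => Function.update x i (x i + 1) with hτ
  have key : ∀ x : Fin (2*n+1) → ZMod 2, x i = 0 →
      F x + F (τ x) = if wtV x = n then 2 * chi (∑ j, w j * x j) else 0 := by
    intro x hx
    have hτx : τ x = Function.update x i 1 := by rw [hτ]; simp [hx]
    have hwt : wtV (τ x) = wtV x + 1 := by rw [hτx]; exact wtV_update x i hx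
    have hdot : (∑ j, w j * (τ x) j) = (∑ j, w j * x j) + 1 := by
      rw [hτ]
      rw [dot_update w x i hi (x i + 1), hx]
      ring
    rw [hF]
    simp only [hdot, hwt, chi_add, chi_one, maj]
    by_cases hu : wtV x = n
    · rw [if_pos hu, hu]
      rw [if_neg (by omega), if_pos (by omega)]
      have c0 : chi 0 = 1 := by decide
      have c1 : chi 1 = -1 := by decide
      rw [c0, c1]; ring
    · rw [if_neg hu]
      have hiff : (n + 1 ≤ wtV x) ↔ (n + 1 ≤ wtV x + 1) := by omega
      by_cases hle : n + 1 ≤ wtV x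
      · rw [if_pos hle, if_pos (hiff.mp hle)]; ring
      · rw [if_neg hle, if_neg (fun h => hle (hiff.mpr h))]; ring
  have hsplit : ∑ x : Fin (2*n+1) → ZMod 2, F x
      = ∑ x ∈ univ.filter (fun x => x i = (0:ZMod 2)), F x
        + ∑ x ∈ univ.filter (fun x => ¬ x i = (0:ZMod 2)), F x :=
    (Finset.sum_filter_add_sum_filter_not univ _ F).symm
  have hbij : ∑ x ∈ univ.filter (fun x => ¬ x i = (0:ZMod 2)), F x
      = ∑ x ∈ univ.filter (fun x => x i = (0:ZMod 2)), F (τ x) := by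
    apply Finset.sum_nbij' (i := τ) (j := τ)
    · intro a ha
      simp only [mem_filter, mem_univ, true_and] at ha ⊢
      rw [hτ]
      simp only [Function.update_self]
      have : a i = 1 := by
        revert ha; generalize a i = v; revert v; decide
      rw [this]; decide
    · intro a ha
      simp only [mem_filter, mem_univ, true_and] at ha ⊢
      rw [hτ]
      simp only [Function.update_self, ha]
      decide
    · intro a _; exact tau_invol a i
    · intro a _; exact tau_invol a i
    · intro a _; exact congrArg F (tau_invol a i).symm
  rw [hsplit, hbij, ← Finset.sum_add_distrib]
  rw [Finset.sum_congr rfl (fun x hx => key x (by simpa using (Finset.mem_filter.mp hx).2))]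
  rw [← Finset.sum_filter, Finset.filter_filter, Finset.mul_sum]

lemma zmod2_eq_one_of_ne_zero : ∀ v : ZMod 2, v ≠ 0 → v = 1 := by decide
lemma chi_zero : chi 0 = 1 := by decide

lemma card_univ_fun (N : ℕ) : (univ : Finset (Fin N → ZMod 2)).card = 2 ^ N := by
  rw [Finset.card_univ]; simp

lemma wtV_le {N : ℕ} (x : Fin N → ZMod 2) : wtV x ≤ N := by
  unfold wtV
  calc (univ.filter (fun i => x i = 1)).card ≤ (univ : Finset (Fin N)).card :=
        Finset.card_filter_le _ _
    _ = N := by simp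

lemma sum_chi {N : ℕ} (h : (Fin N → ZMod 2) → ZMod 2) :
    ∑ x, chi (h x) = 2 ^ N - 2 * ((wtF h : ℤ)) := by
  have h1 : ∀ x : Fin N → ZMod 2,
      chi (h x) = 1 - 2 * (if h x = 1 then (1:ℤ) else 0) := by
    intro x; unfold chi; split <;> ring
  rw [Finset.sum_congr rfl (fun x _ => h1 x), Finset.sum_sub_distrib,
    Finset.sum_const, ← Finset.mul_sum, Finset.sum_boole, card_univ_fun]
  unfold wtF
  ring

lemma card_A (n : ℕ) (i : Fin (2*n+1)) :
    (univ.filter (fun x : Fin (2*n+1) → ZMod 2 => x i = 0 ∧ wtV x = n)).card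
      = Nat.choose (2*n) n := by
  have hone : (0 : ZMod 2) ≠ 1 := by decide
  have hcard : ((univ : Finset (Fin (2*n+1))).erase i).card = 2*n := by
    rw [Finset.card_erase_of_mem (Finset.mem_univ i)]; simp
  have hpc : ((univ.erase i).powersetCard n).card = (2*n).choose n := by
    rw [Finset.card_powersetCard, hcard]
  rw [← hpc]
  apply Finset.card_nbij (i := fun x => univ.filter (fun j => x j = 1))
  · intro x hx
    simp only [Finset.mem_coe, Finset.mem_filter, Finset.mem_univ, true_and] at hx ⊢
    rw [Finset.mem_powersetCard]
    constructor
    · intro j hj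
      simp only [Finset.mem_filter, Finset.mem_univ, true_and] at hj
      apply Finset.mem_erase.mpr
      refine ⟨?_, Finset.mem_univ j⟩
      rintro rfl
      rw [hx.1] at hj
      exact hone hj
    · exact hx.2
  · intro x hx y hy hxy
    simp only [Finset.coe_filter, Set.mem_setOf_eq] at hx hy
    funext j
    have hj := Finset.ext_iff.mp hxy j
    simp only [Finset.mem_filter, Finset.mem_univ, true_and] at hj
    have h2 : ∀ v : ZMod 2, v = 0 ∨ v = 1 := by decide
    rcases h2 (x j) with h | h <;> rcases h2 (y j) with h' | h' <;>
      simp [h, h'] at hj ⊢ <;> tauto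
  · intro s hs
    rw [Finset.mem_coe, Finset.mem_powersetCard] at hs
    refine ⟨fun j => if j ∈ s then 1 else 0, ?_, ?_⟩
    · simp only [Finset.coe_filter, Set.mem_setOf_eq, Finset.mem_univ, true_and]
      constructor
      · have : i ∉ s := fun h => (Finset.mem_erase.mp (hs.1 h)).1 rfl
        simp [this]
      · unfold wtV
        have : (univ.filter (fun j => (if j ∈ s then (1:ZMod 2) else 0) = 1)) = s := by
          ext j
          by_cases hj : j ∈ s <;> simp [hj, hone]
        rw [this, hs.2]
    · have : (univ.filter (fun j => (if j ∈ s then (1:ZMod 2) else 0) = 1)) = s := by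
        ext j
        by_cases hj : j ∈ s <;> simp [hj, hone]
      exact this

lemma wtV_compl (n : ℕ) (x : Fin (2*n+1) → ZMod 2) :
    wtV (fun j => x j + 1) = (2*n+1) - wtV x := by
  have key : ∀ v : ZMod 2, (v + 1 = 1) ↔ ¬ (v = 1) := by decide
  unfold wtV
  have h1 : (univ.filter (fun j => x j + 1 = 1))
      = (univ.filter (fun j => ¬ x j = 1)) := by
    ext j; simp [key]
  rw [h1]
  have h2 := Finset.card_filter_add_card_filter_not
    (s := (univ : Finset (Fin (2*n+1)))) (p := fun j => x j = 1)
  have h3 : (univ : Finset (Fin (2*n+1))).card = 2*n+1 := by simp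
  omega

lemma sum_chi_maj (n : ℕ) :
    ∑ x : Fin (2*n+1) → ZMod 2, chi (maj (2*n+1) (n+1) x) = 0 := by
  have h1 : ∀ (x : Fin (2*n+1) → ZMod 2), x ∈ (univ : Finset (Fin (2*n+1) → ZMod 2)) →
      chi (maj (2*n+1) (n+1) x) + chi (maj (2*n+1) (n+1) (fun j => x j + 1)) = 0 := by
    intro x _
    have hle := wtV_le x
    have hc := wtV_compl n x
    unfold maj
    rw [hc]
    by_cases h : n + 1 ≤ wtV x
    · rw [if_pos h, if_neg (by omega)]
      decide
    · rw [if_neg h, if_pos (by omega)]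
      decide
  have h2 : ∀ (x : Fin (2*n+1) → ZMod 2) (hx : x ∈ (univ : Finset (Fin (2*n+1) → ZMod 2))),
      chi (maj (2*n+1) (n+1) x) ≠ 0 → (fun j => x j + 1) ≠ x := by
    intro x _ _ h
    have h0 := congrFun h (0 : Fin (2*n+1))
    have hcontr : (1 : ZMod 2) = 0 := by rwa [add_eq_left] at h0
    exact one_ne_zero hcontr
  have h3 : ∀ (x : Fin (2*n+1) → ZMod 2), x ∈ (univ : Finset (Fin (2*n+1) → ZMod 2)) →
      (fun j => x j + 1) ∈ (univ : Finset (Fin (2*n+1) → ZMod 2)) :=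
    fun x _ => Finset.mem_univ _
  have h4 : ∀ (x : Fin (2*n+1) → ZMod 2) (hx : x ∈ (univ : Finset (Fin (2*n+1) → ZMod 2))),
      (fun j => (x j + 1) + 1) = x := by
    intro x _
    funext j
    exact (by decide : ∀ v : ZMod 2, v + 1 + 1 = v) _
  exact Finset.sum_involution (fun x _ => fun j => x j + 1) h1 h2 h3 h4

lemma two_mul_hdist (n : ℕ) (w : Fin (2*n+1) → ZMod 2) (b : ZMod 2) :
    2 * ((hdist (maj (2*n+1) (n+1)) (fun x => (∑ i, w i * x i) + b) : ℤ))
      = 2^(2*n+1) - chi b * ∑ x : Fin (2*n+1) → ZMod 2,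
          chi (maj (2*n+1) (n+1) x) * chi (∑ j, w j * x j) := by
  have h := sum_chi (N := 2*n+1)
    (fun x => maj (2*n+1) (n+1) x + ((∑ i, w i * x i) + b))
  have h2 : ∀ x : Fin (2*n+1) → ZMod 2,
      chi (maj (2*n+1) (n+1) x + ((∑ i, w i * x i) + b))
        = chi b * (chi (maj (2*n+1) (n+1) x) * chi (∑ j, w j * x j)) := by
    intro x; rw [chi_add, chi_add]; ring
  rw [Finset.sum_congr rfl (fun x _ => h2 x), ← Finset.mul_sum] at h
  have hdd : hdist (maj (2*n+1) (n+1)) (fun x => (∑ i, w i * x i) + b)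
      = wtF (fun x => maj (2*n+1) (n+1) x + ((∑ i, w i * x i) + b)) := rfl
  rw [hdd]
  linarith [h]

lemma choose_le_pow (n : ℕ) : Nat.choose (2*n) n ≤ 2^(2*n) := by
  have h := Nat.sum_range_choose (2*n)
  calc Nat.choose (2*n) n
      ≤ ∑ i ∈ Finset.range (2*n+1), Nat.choose (2*n) i :=
        Finset.single_le_sum (fun i _ => Nat.zero_le _) (Finset.mem_range.mpr (by omega))
    _ = 2^(2*n) := h

lemma lower (n : ℕ) (w : Fin (2*n+1) → ZMod 2) (b : ZMod 2) :
    2^(2*n) - Nat.choose (2*n) n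
      ≤ hdist (maj (2*n+1) (n+1)) (fun x => (∑ i, w i * x i) + b) := by
  have hd := two_mul_hdist n w b
  set S := ∑ x : Fin (2*n+1) → ZMod 2,
      chi (maj (2*n+1) (n+1) x) * chi (∑ j, w j * x j) with hS
  have hSb : |S| ≤ 2 * (Nat.choose (2*n) n : ℤ) := by
    by_cases hw : w = 0
    · have hS0 : S = 0 := by
        rw [hS]
        have hz : ∀ x : Fin (2*n+1) → ZMod 2,
            chi (maj (2*n+1) (n+1) x) * chi (∑ j, w j * x j)
              = chi (maj (2*n+1) (n+1) x) := by
          intro x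
          have : (∑ j, w j * x j) = 0 := by subst hw; simp
          rw [this, chi_zero, mul_one]
        rw [Finset.sum_congr rfl (fun x _ => hz x)]
        exact sum_chi_maj n
      rw [hS0, abs_zero]
      positivity
    · obtain ⟨i, hi0⟩ := Function.ne_iff.mp hw
      have hi : w i = 1 := zmod2_eq_one_of_ne_zero _ (by simpa using hi0)
      rw [hS, S_eq n w i hi, abs_mul]
      rw [show |(2:ℤ)| = 2 by norm_num]
      have hT : |∑ x ∈ univ.filter
            (fun x : Fin (2*n+1) → ZMod 2 => x i = 0 ∧ wtV x = n),
            chi (∑ j, w j * x j)|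
          ≤ ((univ.filter
            (fun x : Fin (2*n+1) → ZMod 2 => x i = 0 ∧ wtV x = n)).card : ℤ) := by
        calc |∑ x ∈ univ.filter
              (fun x : Fin (2*n+1) → ZMod 2 => x i = 0 ∧ wtV x = n),
              chi (∑ j, w j * x j)|
            ≤ ∑ x ∈ univ.filter
              (fun x : Fin (2*n+1) → ZMod 2 => x i = 0 ∧ wtV x = n),
              |chi (∑ j, w j * x j)| := Finset.abs_sum_le_sum_abs _ _
          _ = ∑ x ∈ univ.filter
              (fun x : Fin (2*n+1) → ZMod 2 => x i = 0 ∧ wtV x = n), 1 := by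
              apply Finset.sum_congr rfl
              intro x _; exact abs_chi _
          _ = _ := by simp
      rw [card_A n i] at hT
      linarith
  have hb1 : chi b = 1 ∨ chi b = -1 := by unfold chi; split <;> simp
  have hbS : chi b * S ≤ 2 * (Nat.choose (2*n) n : ℤ) := by
    rcases hb1 with h | h <;> rw [h]
    · calc 1 * S = S := one_mul S
        _ ≤ |S| := le_abs_self S
        _ ≤ _ := hSb
    · calc (-1) * S = -S := by ring
        _ ≤ |S| := neg_le_abs S
        _ ≤ _ := hSb
  have hP : ((2:ℤ))^(2*n+1) = 2 * ((2^(2*n) : ℕ) : ℤ) := by push_cast; ring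
  rw [hP] at hd
  set d : ℕ := hdist (maj (2*n+1) (n+1)) (fun x => (∑ i, w i * x i) + b) with hdd
  set P : ℕ := 2^(2*n) with hPP
  set C : ℕ := Nat.choose (2*n) n with hCC
  have hkey : (P : ℤ) - (C : ℤ) ≤ (d : ℤ) := by linarith
  rw [Nat.sub_le_iff_le_add]
  have h2 : (P : ℤ) ≤ (d : ℤ) + (C : ℤ) := by linarith
  exact_mod_cast h2

def e0 (n : ℕ) : Fin (2*n+1) → ZMod 2 :=
  fun j => if j = (0 : Fin (2*n+1)) then 1 else 0

lemma upper (n : ℕ) :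
    hdist (maj (2*n+1) (n+1)) (fun x => (∑ i, e0 n i * x i) + 0)
      = 2^(2*n) - Nat.choose (2*n) n := by
  have hi : e0 n (0 : Fin (2*n+1)) = 1 := if_pos rfl
  have hd := two_mul_hdist n (e0 n) 0
  rw [S_eq n (e0 n) (0 : Fin (2*n+1)) hi] at hd
  have hT : ∑ x ∈ univ.filter
        (fun x : Fin (2*n+1) → ZMod 2 =>
          x (0 : Fin (2*n+1)) = 0 ∧ wtV x = n),
        chi (∑ j, e0 n j * x j) = (Nat.choose (2*n) n : ℤ) := by
    have hone : ∀ x ∈ univ.filter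
        (fun x : Fin (2*n+1) → ZMod 2 =>
          x (0 : Fin (2*n+1)) = 0 ∧ wtV x = n),
        chi (∑ j, e0 n j * x j) = 1 := by
      intro x hx
      have hx0 : x (0 : Fin (2*n+1)) = 0 :=
        (Finset.mem_filter.mp hx).2.1
      have hsum : (∑ j, e0 n j * x j) = x (0 : Fin (2*n+1)) := by
        unfold e0
        simp [ite_mul]
      rw [hsum, hx0, chi_zero]
    rw [Finset.sum_congr rfl hone, Finset.sum_const, nsmul_eq_mul, mul_one,
      card_A n (0 : Fin (2*n+1))]
  rw [hT, chi_zero, one_mul] at hd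
  have hP : ((2:ℤ))^(2*n+1) = 2 * ((2^(2*n) : ℕ) : ℤ) := by push_cast; ring
  rw [hP] at hd
  have hc := choose_le_pow n
  set d : ℕ := hdist (maj (2*n+1) (n+1)) (fun x => (∑ i, e0 n i * x i) + 0) with hdd
  set P : ℕ := 2^(2*n) with hPP
  set C : ℕ := Nat.choose (2*n) n with hCC
  have h1 : (d : ℤ) = (P : ℤ) - (C : ℤ) := by linarith
  have h2 : (d : ℤ) = ((P - C : ℕ) : ℤ) := by rw [h1, Nat.cast_sub hc]
  exact_mod_cast h2

end MajAux

/-- `N(M_{2n+1}) = 2^(2n) - C(2n,n)`. -/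
theorem nonlinearity_majority_odd (n : ℕ) (hn : 2 ≤ n) :
    nlin (maj (2 * n + 1) (n + 1)) = 2 ^ (2 * n) - Nat.choose (2 * n) n := by
  unfold nlin
  apply le_antisymm
  · apply Nat.sInf_le
    exact ⟨fun x => (∑ i, MajAux.e0 n i * x i) + 0,
      ⟨MajAux.e0 n, 0, fun x => rfl⟩, (MajAux.upper n).symm⟩
  · apply le_csInf
    · exact ⟨_, ⟨fun x => (∑ i, MajAux.e0 n i * x i) + 0,
        ⟨MajAux.e0 n, 0, fun x => rfl⟩, rfl⟩⟩
    · rintro d ⟨a, ⟨w, b, ha⟩, rfl⟩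
      have hae : a = fun x => (∑ i, w i * x i) + b := funext ha
      rw [hae]
      exact MajAux.lower n w b
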